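/- Let A be a finite dimensional algebra over an algebraically closed field K, let T ∈ mod(A) be a silting module with respect to a projective presentation σ, so that the functorially finite torsion class T := gen(T) equals D_σ, and let A →φ T₀ → T₁ → 0 be an exact sequence with T₀, T₁ ∈ add(T) in which φ is a minimal left T-approximation of A. Then there exists a projective presentation σ₁: Q₁ → Q₀ of T₁ (an exact sequence Q₁ → Q₀ → T₁ → 0 with Q₁, Q₀ finitely generated projective A-modules) such that D_{σ₁} = T. -/

import Mathlib

open CategoryTheory

section Defs

variable (K : Type) [Field K] (A : Type) [Ring A] [Algebra K A]

/-- An `A`-module is in `mod(A)` if it is finite dimensional over `K`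
(via restriction of scalars along `K → A`). -/
def modCls : Set (ModuleCat A) :=
  {M | @FiniteDimensional K (RestrictScalars K A M) _ _ (RestrictScalars.module K A M)}

variable {A}

/-- A class of modules is replete (closed under isomorphisms). -/
def IsoClosed (C : Set (ModuleCat A)) : Prop :=
  ∀ ⦃M N : ModuleCat A⦄, (M ≅ N) → M ∈ C → N ∈ C

/-- Closed under quotients. -/
def QuotClosed (C : Set (ModuleCat A)) : Prop :=
  ∀ ⦃M N : ModuleCat A⦄ (f : M ⟶ N), Function.Surjective f → M ∈ C → N ∈ C

/-- Closed under extensions. -/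
def ExtClosed (C : Set (ModuleCat A)) : Prop :=
  ∀ ⦃M E N : ModuleCat A⦄ (f : M ⟶ E) (g : E ⟶ N),
    Function.Injective f → Function.Surjective g → Function.Exact f g →
    M ∈ C → N ∈ C → E ∈ C

/-- Closed under kernels. -/
def KerClosed (C : Set (ModuleCat A)) : Prop :=
  ∀ ⦃M N : ModuleCat A⦄ (f : M ⟶ N), M ∈ C → N ∈ C →
    ModuleCat.of A ↥(LinearMap.ker f.hom) ∈ C

/-- Closed under cokernels. -/
def CokerClosed (C : Set (ModuleCat A)) : Prop :=
  ∀ ⦃M N : ModuleCat A⦄ (f : M ⟶ N), M ∈ C → N ∈ C →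
    ModuleCat.of A (N ⧸ LinearMap.range f.hom) ∈ C

variable (A)

/-- A wide subcategory of `mod(A)`: a replete class of finite dimensional modules closed
under kernels, cokernels and extensions. -/
def IsWide (C : Set (ModuleCat A)) : Prop :=
  C ⊆ modCls K A ∧ IsoClosed C ∧ KerClosed C ∧ CokerClosed C ∧ ExtClosed C

/-- A torsion class in `mod(A)`: a replete class of finite dimensional modules closed
under quotients and extensions. -/
def IsTorsionClass (C : Set (ModuleCat A)) : Prop :=
  C ⊆ modCls K A ∧ IsoClosed C ∧ QuotClosed C ∧ ExtClosed C

variable {A}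

/-- `gen C`: all quotients of finite direct sums of objects of `C`. -/
def gen (C : Set (ModuleCat A)) : Set (ModuleCat A) :=
  {X | ∃ (n : ℕ) (M : Fin n → ModuleCat A) (_ : ∀ i, M i ∈ C)
      (f : ModuleCat.of A (∀ i, M i) ⟶ X), Function.Surjective f}

/-- Modules admitting a `C`-filtration `0 = F 0 ⊆ F 1 ⊆ ⋯ ⊆ F n = X` of length exactly `n`,
with all subquotients `F (i+1) / F i` in `C`. -/
def filtLen (C : Set (ModuleCat A)) (n : ℕ) : Set (ModuleCat A) :=
  {X | ∃ F : Fin (n + 1) → Submodule A X,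
      Monotone F ∧ F 0 = ⊥ ∧ F (Fin.last n) = ⊤ ∧
      ∀ i : Fin n, ModuleCat.of A
        (↥(F i.succ) ⧸ Submodule.comap (F i.succ).subtype (F i.castSucc)) ∈ C}

/-- `filt C`: all modules admitting a finite filtration with subquotients in `C`. -/
def filt (C : Set (ModuleCat A)) : Set (ModuleCat A) :=
  {X | ∃ n, X ∈ filtLen C n}

/-- `C^{⋆n}`: modules with a `C`-filtration of length at most `n`. -/
def filtAtMost (C : Set (ModuleCat A)) (n : ℕ) : Set (ModuleCat A) :=
  {X | ∃ m ≤ n, X ∈ filtLen C m}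

/-- `α(T)`: the modules `X ∈ T` such that for every map `g : Y → X` with `Y ∈ T`,
the kernel of `g` is again in `T`. -/
def alpha (T : Set (ModuleCat A)) : Set (ModuleCat A) :=
  {X | X ∈ T ∧ ∀ ⦃Y : ModuleCat A⦄ (g : Y ⟶ X), Y ∈ T →
      ModuleCat.of A ↥(LinearMap.ker g.hom) ∈ T}

/-- `g : X ⟶ C₁` is a left `C`-approximation of `X`. -/
def IsLeftApprox (C : Set (ModuleCat A)) {X C₁ : ModuleCat A} (g : X ⟶ C₁) : Prop :=
  C₁ ∈ C ∧ ∀ ⦃C' : ModuleCat A⦄ (h : X ⟶ C'), C' ∈ C → ∃ k : C₁ ⟶ C', g ≫ k = h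

/-- `g : C₂ ⟶ X` is a right `C`-approximation of `X`. -/
def IsRightApprox (C : Set (ModuleCat A)) {C₂ X : ModuleCat A} (g : C₂ ⟶ X) : Prop :=
  C₂ ∈ C ∧ ∀ ⦃C' : ModuleCat A⦄ (h : C' ⟶ X), C' ∈ C → ∃ k : C' ⟶ C₂, k ≫ g = h

/-- A left approximation is (left) minimal if every endomorphism compatible with it is an
isomorphism. -/
def IsMinimalLeftApprox (C : Set (ModuleCat A)) {X C₁ : ModuleCat A} (g : X ⟶ C₁) : Prop :=
  IsLeftApprox C g ∧ ∀ h : C₁ ⟶ C₁, g ≫ h = g → IsIso h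

variable (A)

/-- A class `C` is functorially finite in `mod(A)` if every finite dimensional module has
both a left and a right `C`-approximation. -/
def FunctFinite (C : Set (ModuleCat A)) : Prop :=
  ∀ X ∈ modCls K A, (∃ (C₁ : ModuleCat A) (g : X ⟶ C₁), IsLeftApprox C g) ∧
    (∃ (C₂ : ModuleCat A) (g : C₂ ⟶ X), IsRightApprox C g)

variable {A}

/-- `add M`: direct summands of finite direct sums of copies of `M`. -/
def addOf (M : ModuleCat A) : Set (ModuleCat A) :=
  {X | ∃ (n : ℕ) (i : X ⟶ ModuleCat.of A (Fin n → M)) (r : ModuleCat.of A (Fin n → M) ⟶ X),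
      i ≫ r = 𝟙 X}

/-- `gen M`: quotients of finite direct sums of copies of `M`. -/
def genOf (M : ModuleCat A) : Set (ModuleCat A) :=
  {X | ∃ (n : ℕ) (f : ModuleCat.of A (Fin n → M) ⟶ X), Function.Surjective f}

/-- `P` is split projective in `C`: `P ∈ C` and every epimorphism onto `P` from an
object of `C` splits. -/
def SplitProjIn (C : Set (ModuleCat A)) (P : ModuleCat A) : Prop :=
  P ∈ C ∧ ∀ ⦃M : ModuleCat A⦄ (f : M ⟶ P), M ∈ C → Function.Surjective f →
    ∃ s : P ⟶ M, s ≫ f = 𝟙 P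

end Defs

/-- `D_σ`: the finite dimensional modules `X` such that `Hom(σ, X)` is surjective. -/
def Dclass (K : Type) [Field K] {A : Type} [Ring A] [Algebra K A]
    {P₁ P₀ : ModuleCat A} (σ : P₁ ⟶ P₀) : Set (ModuleCat A) :=
  {X | X ∈ modCls K A ∧ ∀ k : P₁ ⟶ X, ∃ h : P₀ ⟶ X, σ ≫ h = k}

section AuxLemmas

variable {R : Type} [Ring R]

/-- The linear equivalence between `Π₀ i, M i` and `∀ i, M i` over a finite index type. -/
private noncomputable def dfinsuppLequivPiAux {ι : Type} [Fintype ι]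
    {M : ι → Type} [∀ i, AddCommGroup (M i)] [∀ i, Module R (M i)] :
    (Π₀ i, M i) ≃ₗ[R] ∀ i, M i :=
  { DFinsupp.equivFunOnFintype with
    map_add' := fun f g => by ext i; simp [DFinsupp.equivFunOnFintype]
    map_smul' := fun c f => by ext i; simp [DFinsupp.equivFunOnFintype] }

private theorem projective_pi_aux {ι : Type} [Fintype ι] [DecidableEq ι]
    {M : ι → Type} [∀ i, AddCommGroup (M i)] [∀ i, Module R (M i)]
    [∀ i, Module.Projective R (M i)] : Module.Projective R (∀ i, M i) :=
  Module.Projective.of_equiv (dfinsuppLequivPiAux (R := R))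

/-- Fitting's lemma. -/
private theorem fitting_aux {M : Type} [AddCommGroup M] [Module R M]
    [IsNoetherian R M] [IsArtinian R M] (f : M →ₗ[R] M) :
    ∃ m : ℕ, 1 ≤ m ∧ ∀ l, m ≤ l →
      IsCompl (LinearMap.ker (f ^ l)) (LinearMap.range (f ^ l)) := by
  obtain ⟨n₁, h₁⟩ := monotone_stabilizes_iff_noetherian.mpr inferInstance f.iterateKer
  obtain ⟨n₂, h₂⟩ := IsArtinian.monotone_stabilizes f.iterateRange
  refine ⟨max (max n₁ n₂) 1, le_max_right _ _, fun l hl => ?_⟩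
  have hl1 : n₁ ≤ l := le_trans (le_trans (le_max_left _ _) (le_max_left _ _)) hl
  have hl2 : n₂ ≤ l := le_trans (le_trans (le_max_right _ _) (le_max_left _ _)) hl
  have hker : LinearMap.ker (f ^ l) = LinearMap.ker (f ^ (l + l)) :=
    (h₁ l hl1).symm.trans (h₁ (l + l) (le_trans hl1 (Nat.le_add_right _ _)))
  have hrange : LinearMap.range (f ^ l) = LinearMap.range (f ^ (l + l)) :=
    congrArg OrderDual.ofDual
      ((h₂ l hl2).symm.trans (h₂ (l + l) (le_trans hl2 (Nat.le_add_right _ _))))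
  constructor
  · rw [disjoint_iff, eq_bot_iff]
    rintro x ⟨hxk, hxr⟩
    obtain ⟨y, rfl⟩ := hxr
    have hy : (f ^ (l + l)) y = 0 := by
      rw [pow_add, Module.End.mul_apply]; exact hxk
    have hy' : y ∈ LinearMap.ker (f ^ l) := by rw [hker]; exact hy
    simpa using hy'
  · rw [codisjoint_iff, eq_top_iff]
    intro x _
    have hx : (f ^ l) x ∈ LinearMap.range (f ^ (l + l)) := by
      rw [← hrange]; exact ⟨x, rfl⟩
    obtain ⟨z, hz⟩ := hx
    refine Submodule.mem_sup.mpr ⟨x - (f ^ l) z, ?_, (f ^ l) z, ⟨z, rfl⟩, by abel⟩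
    have : (f ^ l) ((f ^ l) z) = (f ^ (l + l)) z := by
      rw [pow_add, Module.End.mul_apply]
    simp only [LinearMap.mem_ker, map_sub, this, hz, sub_self]

/-- Factorization of a linear map through a surjection whose kernel it kills. -/
private theorem exists_factor_aux {M N X : Type} [AddCommGroup M] [Module R M]
    [AddCommGroup N] [Module R N] [AddCommGroup X] [Module R X]
    (p : M →ₗ[R] N) (h : M →ₗ[R] X) (hp : Function.Surjective p)
    (hk : LinearMap.ker p ≤ LinearMap.ker h) : ∃ g : N →ₗ[R] X, g ∘ₗ p = h := by
  refine ⟨(LinearMap.ker p).liftQ h hk ∘ₗ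
      (p.quotKerEquivOfSurjective hp).symm.toLinearMap, ?_⟩
  ext x
  have hx : (p.quotKerEquivOfSurjective hp).symm (p x) =
      Submodule.Quotient.mk x := by
    apply (p.quotKerEquivOfSurjective hp).injective
    rw [LinearEquiv.apply_symm_apply]
    rw [show p.quotKerEquivOfSurjective hp =
        p.quotKerEquivRange.trans (LinearEquiv.ofTop (LinearMap.range p)
          (LinearMap.range_eq_top.2 hp)) from rfl]
    rw [LinearEquiv.trans_apply, LinearEquiv.ofTop_apply,
      LinearMap.quotKerEquivRange_apply_mk]
  simp [hx]

end AuxLemmas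

theorem partial_silting_presentation_of_T1 (K : Type) [Field K] [IsAlgClosed K] (A : Type) [Ring A] [Algebra K A]
    [FiniteDimensional K A]
    (Tm : ModuleCat A) (hTm : Tm ∈ modCls K A)
    (P₁ P₀ : ModuleCat A)
    (hP₁f : Module.Finite A P₁) (hP₁p : Module.Projective A P₁)
    (hP₀f : Module.Finite A P₀) (hP₀p : Module.Projective A P₀)
    (σ : P₁ ⟶ P₀) (π : P₀ ⟶ Tm)
    (hπ : Function.Surjective π) (hexσ : Function.Exact σ π)
    (hsilting : Dclass K σ = genOf Tm)
    (T₀ T₁ : ModuleCat A) (hT₀ : T₀ ∈ addOf Tm) (hT₁ : T₁ ∈ addOf Tm)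
    (φ : ModuleCat.of A A ⟶ T₀) (ψ : T₀ ⟶ T₁)
    (hφ : IsMinimalLeftApprox (genOf Tm) φ) (hψ : Function.Surjective ψ)
    (hexact : Function.Exact φ ψ) :
    ∃ (Q₁ Q₀ : ModuleCat A) (σ₁ : Q₁ ⟶ Q₀) (π₁ : Q₀ ⟶ T₁),
      Module.Finite A Q₁ ∧ Module.Projective A Q₁ ∧
      Module.Finite A Q₀ ∧ Module.Projective A Q₀ ∧
      Function.Surjective π₁ ∧ Function.Exact σ₁ π₁ ∧
      Dclass K σ₁ = genOf Tm := by
  classical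
  obtain ⟨n, i0, r0, hir⟩ := hT₀
  -- base instances
  haveI := hP₁f; haveI := hP₁p; haveI := hP₀f; haveI := hP₀p
  haveI hNA : IsNoetherianRing A := isNoetherian_of_tower K inferInstance
  haveI hAA : IsArtinianRing A := isArtinian_of_tower K inferInstance
  haveI : Module.Projective A (Fin n → ↥P₀) := projective_pi_aux
  haveI : Module.Projective A (Fin n → ↥P₁) := projective_pi_aux
  -- linear maps
  let σL : ↥P₁ →ₗ[A] ↥P₀ := σ.hom
  let πL : ↥P₀ →ₗ[A] ↥Tm := π.hom
  let φL : A →ₗ[A] ↥T₀ := φ.hom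
  let ψL : ↥T₀ →ₗ[A] ↥T₁ := ψ.hom
  let i0L : ↥T₀ →ₗ[A] (Fin n → ↥Tm) := i0.hom
  let r0L : (Fin n → ↥Tm) →ₗ[A] ↥T₀ := r0.hom
  have hir' : ∀ t, r0L (i0L t) = t := fun t =>
    congrArg (fun f : T₀ ⟶ T₀ => f.hom t) hir
  have hkerπL : LinearMap.ker πL = LinearMap.range σL := LinearMap.exact_iff.mp hexσ
  have hkerψL : LinearMap.ker ψL = LinearMap.range φL := LinearMap.exact_iff.mp hexact
  -- the componentwise presentation of Tm^n
  let σn : (Fin n → ↥P₁) →ₗ[A] (Fin n → ↥P₀) :=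
    LinearMap.pi (fun j => σL ∘ₗ LinearMap.proj j)
  let πn : (Fin n → ↥P₀) →ₗ[A] (Fin n → ↥Tm) :=
    LinearMap.pi (fun j => πL ∘ₗ LinearMap.proj j)
  have hσn : ∀ x j, σn x j = σL (x j) := fun _ _ => rfl
  have hπn : ∀ x j, πn x j = πL (x j) := fun _ _ => rfl
  have hπnsurj : Function.Surjective πn := by
    intro y
    refine ⟨fun j => Classical.choose (hπ (y j)), funext fun j => ?_⟩
    exact Classical.choose_spec (hπ (y j))
  have hexπn : LinearMap.ker πn = LinearMap.range σn := by
    ext x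
    simp only [LinearMap.mem_ker, LinearMap.mem_range]
    constructor
    · intro hx
      have hxj : ∀ j, ∃ w, σL w = x j := by
        intro j
        have : πL (x j) = 0 := congrFun hx j
        have hmem : x j ∈ LinearMap.ker πL := this
        rw [hkerπL] at hmem
        exact hmem
      refine ⟨fun j => Classical.choose (hxj j), funext fun j => ?_⟩
      exact Classical.choose_spec (hxj j)
    · rintro ⟨w, rfl⟩
      funext j
      have : σL (w j) ∈ LinearMap.ker πL := by
        rw [hkerπL]; exact ⟨w j, rfl⟩
      exact this
  -- the idempotent e on Tm^n and its lifts
  let eT : (Fin n → ↥Tm) →ₗ[A] (Fin n → ↥Tm) := i0L ∘ₗ r0L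
  have heT : ∀ w, eT w = i0L (r0L w) := fun _ => rfl
  have he_i0 : ∀ t, eT (i0L t) = i0L t := fun t => by
    rw [heT, hir']
  have heik : ∀ (k : ℕ) t, (eT ^ k) (i0L t) = i0L t := by
    intro k
    induction k with
    | zero => intro t; simp
    | succ k ih =>
      intro t
      rw [pow_succ, Module.End.mul_apply, he_i0, ih]
  have hrangee : ∀ w, eT w = i0L (r0L (eT w)) := fun w => by
    simp only [heT, hir']
  obtain ⟨g0, hg0⟩ := Module.projective_lifting_property πn (eT ∘ₗ πn) hπnsurj
  have hg0' : ∀ x, πn (g0 x) = eT (πn x) := fun x => LinearMap.congr_fun hg0 x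
  have hg0mem : ∀ x, g0 (σn x) ∈ LinearMap.range σn := by
    intro x
    rw [← hexπn]
    show πn (g0 (σn x)) = 0
    rw [hg0']
    have : σn x ∈ LinearMap.ker πn := by rw [hexπn]; exact ⟨x, rfl⟩
    have hz : πn (σn x) = 0 := this
    rw [hz, map_zero]
  obtain ⟨g1, hg1⟩ := Module.projective_lifting_property σn.rangeRestrict
    (LinearMap.codRestrict (LinearMap.range σn) (g0 ∘ₗ σn) hg0mem)
    σn.surjective_rangeRestrict
  have hg1' : ∀ x, σn (g1 x) = g0 (σn x) := by
    intro x
    have := LinearMap.congr_fun hg1 x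
    exact congrArg Subtype.val this
  have hcommk : ∀ (k : ℕ) x, σn ((g1 ^ k) x) = (g0 ^ k) (σn x) := by
    intro k
    induction k with
    | zero => intro x; simp
    | succ k ih =>
      intro x
      rw [pow_succ, pow_succ, Module.End.mul_apply, Module.End.mul_apply, ih, hg1']
  have hπg0k : ∀ (k : ℕ) y, πn ((g0 ^ k) y) = (eT ^ k) (πn y) := by
    intro k
    induction k with
    | zero => intro y; simp
    | succ k ih =>
      intro y
      rw [pow_succ, pow_succ, Module.End.mul_apply, Module.End.mul_apply, ih, hg0']
  -- Fitting
  obtain ⟨m₁, hm₁1, hm₁⟩ := fitting_aux g1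
  obtain ⟨m₀, _, hm₀⟩ := fitting_aux g0
  have hm1 : 1 ≤ max m₁ m₀ := le_trans hm₁1 (le_max_left _ _)
  set m := max m₁ m₀ with hmdef
  have hF1 := hm₁ m (le_max_left _ _)
  have hF0 := hm₀ m (le_max_right _ _)
  set S₁ := LinearMap.range (g1 ^ m) with hS₁
  set S₀ := LinearMap.range (g0 ^ m) with hS₀
  -- the split presentation of T₀
  have hmemσ : ∀ u : ↥S₁, σn u.1 ∈ S₀ := by
    rintro ⟨u, w, hw⟩
    exact ⟨σn w, by rw [← hcommk, hw]⟩
  let σ' : ↥S₁ →ₗ[A] ↥S₀ := LinearMap.codRestrict S₀ (σn ∘ₗ S₁.subtype) hmemσ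
  have hσ'val : ∀ u : ↥S₁, (σ' u : Fin n → ↥P₀) = σn u.1 := fun _ => rfl
  let p0 : ↥S₀ →ₗ[A] ↥T₀ := r0L ∘ₗ πn ∘ₗ S₀.subtype
  have hp0val : ∀ x : ↥S₀, p0 x = r0L (πn x.1) := fun _ => rfl
  have hp0surj : Function.Surjective p0 := by
    intro t
    obtain ⟨y, hy⟩ := hπnsurj (i0L t)
    refine ⟨⟨(g0 ^ m) y, ⟨y, rfl⟩⟩, ?_⟩
    rw [hp0val, hπg0k, hy, heik, hir']
  have hp0σ' : ∀ u : ↥S₁, p0 (σ' u) = 0 := by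
    intro u
    rw [hp0val, hσ'val]
    have : σn u.1 ∈ LinearMap.ker πn := by rw [hexπn]; exact ⟨u.1, rfl⟩
    have hz : πn (σn u.1) = 0 := this
    rw [hz, map_zero]
  have hkerp0 : ∀ x : ↥S₀, p0 x = 0 → x ∈ LinearMap.range σ' := by
    intro x hx
    obtain ⟨y, hy⟩ := x.2
    have hπx : πn x.1 = 0 := by
      obtain ⟨kk, hkk⟩ := Nat.exists_eq_add_of_le hm1
      have h1 : πn x.1 = (eT ^ m) (πn y) := by rw [← hy, hπg0k]
      have h2 : πn x.1 = eT ((eT ^ kk) (πn y)) := by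
        rw [h1, hkk, pow_add, pow_one, Module.End.mul_apply]
      have h3 : πn x.1 = i0L (r0L (πn x.1)) := by
        rw [h2]; exact hrangee _
      have h4 : r0L (πn x.1) = 0 := hx
      rw [h4, map_zero] at h3
      exact h3
    have hxr : x.1 ∈ LinearMap.range σn := by
      rw [← hexπn]; exact hπx
    set W := S₀ ⊓ LinearMap.range σn with hW
    have hWmap : ∀ z ∈ W, g0 z ∈ W := by
      rintro z ⟨⟨w, hw⟩, ⟨u, hu⟩⟩
      constructor
      · refine ⟨g0 w, ?_⟩
        have : g0 ((g0 ^ m) w) = (g0 ^ m) (g0 w) := by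
          rw [← Module.End.mul_apply, ← Module.End.mul_apply, ← pow_succ, ← pow_succ']
        rw [← hw, ← this]
      · exact ⟨g1 u, by rw [hg1', hu]⟩
    have hWinj : ∀ z ∈ W, g0 z = 0 → z = 0 := by
      rintro z ⟨hz0, _⟩ hz
      have hzker : z ∈ LinearMap.ker (g0 ^ m) := by
        obtain ⟨kk, hkk⟩ := Nat.exists_eq_add_of_le hm1
        show (g0 ^ m) z = 0
        rw [hkk, add_comm, pow_add, pow_one, Module.End.mul_apply, hz, map_zero]
      have := hF0.disjoint
      rw [disjoint_iff] at this
      have hzz : z ∈ LinearMap.ker (g0 ^ m) ⊓ LinearMap.range (g0 ^ m) := ⟨hzker, hz0⟩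
      rw [this] at hzz
      simpa using hzz
    let gW : ↥W →ₗ[A] ↥W := g0.restrict hWmap
    have hgWinj : Function.Injective gW := by
      intro a b hab
      have h1 : g0 a.1 = g0 b.1 := congrArg Subtype.val hab
      have h2 : g0 (a.1 - b.1) = 0 := by rw [map_sub, h1, sub_self]
      have h3 : a.1 - b.1 ∈ W := W.sub_mem a.2 b.2
      have := hWinj _ h3 h2
      exact Subtype.ext (by rw [← sub_eq_zero]; exact this)
    have hgWsurj : Function.Surjective gW :=
      IsArtinian.surjective_of_injective_endomorphism gW hgWinj
    have hstep : ∀ z ∈ W, ∃ z' ∈ W, g0 z' = z := by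
      intro z hz
      obtain ⟨z', hz'⟩ := hgWsurj ⟨z, hz⟩
      exact ⟨z'.1, z'.2, congrArg Subtype.val hz'⟩
    have hiter : ∀ (k : ℕ), ∀ z ∈ W, ∃ z' ∈ W, (g0 ^ k) z' = z := by
      intro k
      induction k with
      | zero => intro z hz; exact ⟨z, hz, by simp⟩
      | succ k ih =>
        intro z hz
        obtain ⟨z1, hz1, hz1'⟩ := hstep z hz
        obtain ⟨z', hz', hz''⟩ := ih z1 hz1
        refine ⟨z', hz', ?_⟩
        rw [pow_succ', Module.End.mul_apply, hz'', hz1']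
    obtain ⟨w', hw'W, hw'⟩ := hiter m x.1 ⟨x.2, hxr⟩
    obtain ⟨u, hu⟩ := hw'W.2
    refine ⟨⟨(g1 ^ m) u, ⟨u, rfl⟩⟩, ?_⟩
    apply Subtype.ext
    rw [hσ'val]
    show σn ((g1 ^ m) u) = x.1
    rw [hcommk, hu, hw']
  -- the lift of φ
  obtain ⟨lam, hlam⟩ := Module.projective_lifting_property p0 φL hp0surj
  have hlam' : ∀ a, p0 (lam a) = φL a := fun a => LinearMap.congr_fun hlam a
  -- assembling the presentation of T₁
  let σ₁L : (↥S₁ × A) →ₗ[A] ↥S₀ :=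
    σ' ∘ₗ LinearMap.fst A ↥S₁ A + lam ∘ₗ LinearMap.snd A ↥S₁ A
  have hσ₁ : ∀ z : ↥S₁ × A, σ₁L z = σ' z.1 + lam z.2 := fun _ => rfl
  let π₁L : ↥S₀ →ₗ[A] ↥T₁ := ψL ∘ₗ p0
  have hπ₁surj : Function.Surjective π₁L := by
    have : ⇑π₁L = ⇑ψL ∘ ⇑p0 := rfl
    rw [this]
    exact Function.Surjective.comp hψ hp0surj
  have hexact₁ : LinearMap.ker π₁L = LinearMap.range σ₁L := by
    apply le_antisymm
    · intro x hx
      have hx' : ψL (p0 x) = 0 := hx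
      have hmem : p0 x ∈ LinearMap.range φL := by
        rw [← hkerψL]; exact hx'
      obtain ⟨a, ha⟩ := hmem
      have h2 : p0 (x - lam a) = 0 := by
        rw [map_sub, hlam', ha, sub_self]
      obtain ⟨u, hu⟩ := hkerp0 (x - lam a) h2
      refine ⟨(u, a), ?_⟩
      rw [hσ₁]
      show σ' u + lam a = x
      rw [hu]; abel
    · rintro _ ⟨z, rfl⟩
      show ψL (p0 (σ₁L z)) = 0
      rw [hσ₁, map_add, hp0σ', hlam', zero_add]
      have : φL z.2 ∈ LinearMap.ker ψL := by
        rw [hkerψL]; exact ⟨z.2, rfl⟩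
      exact this
  -- finiteness and projectivity
  haveI hfS₁ : Module.Finite A ↥S₁ := Module.Finite.iff_fg.mpr (IsNoetherian.noetherian S₁)
  haveI hfS₀ : Module.Finite A ↥S₀ := Module.Finite.iff_fg.mpr (IsNoetherian.noetherian S₀)
  let t₁ : (Fin n → ↥P₁) →ₗ[A] ↥S₁ :=
    Submodule.linearProjOfIsCompl S₁ (LinearMap.ker (g1 ^ m)) hF1.symm
  have ht₁ : ∀ u : ↥S₁, t₁ u.1 = u := fun u =>
    Submodule.linearProjOfIsCompl_apply_left hF1.symm u
  let t₀ : (Fin n → ↥P₀) →ₗ[A] ↥S₀ :=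
    Submodule.linearProjOfIsCompl S₀ (LinearMap.ker (g0 ^ m)) hF0.symm
  have ht₀ : ∀ u : ↥S₀, t₀ u.1 = u := fun u =>
    Submodule.linearProjOfIsCompl_apply_left hF0.symm u
  haveI hpS₁ : Module.Projective A ↥S₁ :=
    Module.Projective.of_split S₁.subtype t₁ (LinearMap.ext fun u => ht₁ u)
  haveI hpS₀ : Module.Projective A ↥S₀ :=
    Module.Projective.of_split S₀.subtype t₀ (LinearMap.ext fun u => ht₀ u)
  -- the D-class equality
  let Q₁M := ModuleCat.of A (↥S₁ × A)
  let Q₀M := ModuleCat.of A ↥S₀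
  let σ₁M : Q₁M ⟶ Q₀M := ModuleCat.ofHom σ₁L
  have hDeq : Dclass K σ₁M = genOf Tm := by
    apply Set.eq_of_subset_of_subset
    · -- D σ₁ ⊆ gen Tm
      rintro X ⟨hXfd, hXall⟩
      letI : Module K (RestrictScalars K A ↥X) := RestrictScalars.module K A ↥X
      haveI : Module.Finite K (RestrictScalars K A ↥X) := hXfd
      letI : Module A (RestrictScalars K A ↥X) := RestrictScalars.moduleOrig K A ↥X
      haveI hXfin : Module.Finite A ↥X :=
        Module.Finite.of_restrictScalars_finite K A (RestrictScalars K A ↥X)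
      have hgen : ∀ x : ↥X, ∃ G : (Fin n → ↥Tm) →ₗ[A] ↥X, x ∈ LinearMap.range G := by
        intro x
        let kx : (↥S₁ × A) →ₗ[A] ↥X :=
          LinearMap.toSpanSingleton A ↥X x ∘ₗ LinearMap.snd A ↥S₁ A
        obtain ⟨hx, hhx⟩ := hXall (ModuleCat.ofHom kx)
        let hxL : ↥S₀ →ₗ[A] ↥X := hx.hom
        have hc : ∀ z : ↥S₁ × A, hxL (σ₁L z) = kx z := fun z =>
          congrArg (fun F : Q₁M ⟶ X => F.hom z) hhx
        have hxker : LinearMap.ker p0 ≤ LinearMap.ker hxL := by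
          intro z hz
          obtain ⟨u, hu⟩ := hkerp0 z hz
          have h1 : hxL (σ₁L (u, 0)) = kx (u, 0) := hc (u, 0)
          have h2 : σ₁L (u, (0 : A)) = σ' u := by rw [hσ₁]; simp
          have h3 : kx (u, (0 : A)) = 0 := by
            show LinearMap.toSpanSingleton A ↥X x 0 = 0
            simp
          rw [h2, hu, h3] at h1
          exact h1
        obtain ⟨gx, hgx⟩ := exists_factor_aux p0 hxL hp0surj hxker
        have hgx' : ∀ z, gx (p0 z) = hxL z := fun z => LinearMap.congr_fun hgx z
        refine ⟨gx ∘ₗ r0L, i0L (φL 1), ?_⟩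
        show gx (r0L (i0L (φL 1))) = x
        rw [hir']
        have h4 : φL 1 = p0 (lam 1) := (hlam' 1).symm
        rw [h4, hgx']
        have h5 : σ₁L (0, (1 : A)) = lam 1 := by rw [hσ₁]; simp
        have h6 : hxL (σ₁L (0, (1 : A))) = kx (0, (1 : A)) := hc _
        rw [h5] at h6
        rw [h6]
        show LinearMap.toSpanSingleton A ↥X x 1 = x
        simp
      obtain ⟨s, v, hv⟩ := Module.Finite.exists_fin (R := A) (M := ↥X)
      choose G hG using fun j => hgen (v j)
      have hG' : ∀ j, ∃ w, (G j) w = v j := fun j => hG j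
      choose wv hwv using hG'
      let F0 : ((Fin s × Fin n) → ↥Tm) →ₗ[A] ↥X :=
        ∑ j : Fin s, (G j) ∘ₗ LinearMap.funLeft A ↥Tm (fun i : Fin n => (j, i))
      have hF0 : ∀ j : Fin s, v j ∈ LinearMap.range F0 := by
        intro j
        refine ⟨fun q => if q.1 = j then wv j q.2 else 0, ?_⟩
        show (∑ j' : Fin s, (G j') ∘ₗ
          LinearMap.funLeft A ↥Tm (fun i : Fin n => (j', i))) _ = v j
        rw [LinearMap.sum_apply]
        rw [Finset.sum_eq_single j]
        · have heq : (LinearMap.funLeft A ↥Tm (fun i : Fin n => (j, i)))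
              (fun q : Fin s × Fin n => if q.1 = j then wv j q.2 else 0) = wv j := by
            funext i; simp [LinearMap.funLeft_apply]
          rw [LinearMap.comp_apply, heq, hwv]
        · intro j' _ hj'
          have heq : (LinearMap.funLeft A ↥Tm (fun i : Fin n => (j', i)))
              (fun q : Fin s × Fin n => if q.1 = j then wv j q.2 else 0) = 0 := by
            funext i; simp [LinearMap.funLeft_apply, hj']
          rw [LinearMap.comp_apply, heq, map_zero]
        · intro hj; exact absurd (Finset.mem_univ j) hj
      have hF0surj : Function.Surjective F0 := by
        rw [← LinearMap.range_eq_top]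
        apply top_unique
        rw [← hv, Submodule.span_le]
        rintro _ ⟨j, rfl⟩
        exact hF0 j
      refine ⟨s * n, ModuleCat.ofHom (F0 ∘ₗ LinearMap.funLeft A ↥Tm ⇑finProdFinEquiv :
        (Fin (s * n) → ↥Tm) →ₗ[A] ↥X), ?_⟩
      have hco : ⇑(F0 ∘ₗ LinearMap.funLeft A ↥Tm ⇑finProdFinEquiv)
          = ⇑F0 ∘ ⇑(LinearMap.funLeft A ↥Tm ⇑finProdFinEquiv) := rfl
      show Function.Surjective (F0 ∘ₗ LinearMap.funLeft A ↥Tm ⇑finProdFinEquiv)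
      rw [hco]
      exact hF0surj.comp
        (LinearMap.funLeft_surjective_of_injective A ↥Tm _ finProdFinEquiv.injective)
    · -- gen Tm ⊆ D σ₁
      intro X hXg
      have hXD : X ∈ Dclass K σ := by rw [hsilting]; exact hXg
      obtain ⟨hXfd, hXσ⟩ := hXD
      refine ⟨hXfd, ?_⟩
      intro k
      let kL : (↥S₁ × A) →ₗ[A] ↥X := k.hom
      have hXσn : ∀ kk : (Fin n → ↥P₁) →ₗ[A] ↥X,
          ∃ hh : (Fin n → ↥P₀) →ₗ[A] ↥X, hh ∘ₗ σn = kk := by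
        intro kk
        have hj : ∀ j : Fin n, ∃ hh : ↥P₀ →ₗ[A] ↥X,
            hh ∘ₗ σL = kk ∘ₗ LinearMap.single A (fun _ : Fin n => ↥P₁) j := by
          intro j
          obtain ⟨hh, hhh⟩ := hXσ (ModuleCat.ofHom (kk ∘ₗ LinearMap.single A (fun _ : Fin n => ↥P₁) j))
          exact ⟨hh.hom, congrArg ModuleCat.Hom.hom hhh⟩
        choose H hH using hj
        refine ⟨∑ j : Fin n, (H j) ∘ₗ LinearMap.proj j, ?_⟩
        apply LinearMap.ext
        intro w
        rw [LinearMap.comp_apply, LinearMap.sum_apply]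
        have hterm : ∀ j : Fin n, ((H j) ∘ₗ LinearMap.proj j) (σn w)
            = kk (Pi.single j (w j)) := by
          intro j
          have hjj := LinearMap.congr_fun (hH j) (w j)
          simpa [LinearMap.single_apply, hσn] using hjj
        rw [Finset.sum_congr rfl (fun j _ => hterm j), ← map_sum]
        congr 1
        exact Finset.univ_sum_single w
      let k1 : ↥S₁ →ₗ[A] ↥X := kL ∘ₗ LinearMap.inl A ↥S₁ A
      obtain ⟨ht, hht⟩ := hXσn (k1 ∘ₗ t₁)
      let h0 : ↥S₀ →ₗ[A] ↥X := ht ∘ₗ S₀.subtype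
      have hh0 : ∀ u : ↥S₁, h0 (σ' u) = k1 u := by
        intro u
        show ht ((σ' u : Fin n → ↥P₀)) = k1 u
        rw [hσ'val]
        have hu := LinearMap.congr_fun hht u.1
        rw [LinearMap.comp_apply, LinearMap.comp_apply] at hu
        rw [hu, ht₁]
      let δ : A →ₗ[A] ↥X := kL ∘ₗ LinearMap.inr A ↥S₁ A - h0 ∘ₗ lam
      have hδ : ∀ a : A, δ a = kL (0, a) - h0 (lam a) := fun _ => rfl
      obtain ⟨gg, hgg⟩ := hφ.1.2 (ModuleCat.ofHom δ : ModuleCat.of A A ⟶ X) hXg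
      let ggL : ↥T₀ →ₗ[A] ↥X := gg.hom
      have hgg' : ∀ a, ggL (φL a) = δ a := fun a =>
        congrArg (fun F : ModuleCat.of A A ⟶ X => F.hom a) hgg
      refine ⟨ModuleCat.ofHom (h0 + ggL ∘ₗ p0 : ↥S₀ →ₗ[A] ↥X), ?_⟩
      apply ModuleCat.hom_ext
      apply LinearMap.ext
      intro z
      show (h0 + ggL ∘ₗ p0) (σ₁L z) = kL z
      rw [hσ₁, map_add]
      have e1 : (h0 + ggL ∘ₗ p0) (σ' z.1) = kL (z.1, 0) := by
        show h0 (σ' z.1) + ggL (p0 (σ' z.1)) = kL (z.1, 0)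
        rw [hp0σ', map_zero, add_zero, hh0]
        rfl
      have e2 : (h0 + ggL ∘ₗ p0) (lam z.2) = kL (0, z.2) := by
        show h0 (lam z.2) + ggL (p0 (lam z.2)) = kL (0, z.2)
        rw [hlam', hgg', hδ]
        abel
      rw [e1, e2, ← map_add]
      congr 1
      simp
  exact ⟨Q₁M, Q₀M, σ₁M, ModuleCat.ofHom π₁L,
    (inferInstance : Module.Finite A (↥S₁ × A)),
    (inferInstance : Module.Projective A (↥S₁ × A)), hfS₀, hpS₀, hπ₁surj,
    LinearMap.exact_iff.mpr hexact₁, hDeq⟩
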